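/- Let m be a string of infinite length with μ_m its associated measure, M(x) := m(x) - m(0). Define C₀(z) := 2z and recursively C_{n}(z) := 2∫₀^z ∫_{(0,x]} C_{n-1}(r) dμ_m(r) dx. Then for every n ≥ 0 and z ≥ 0: C_n is nonnegative, nondecreasing on [0,∞), and satisfies C_n(z) ≤ (2z/n!)·(2∫₀^z M(x) dx)^n. -/

import Mathlib

open MeasureTheory Set

/-- The recursively defined functions `C_n` are nonnegative, nondecreasing on `[0,∞)`
and satisfy `C_n(z) ≤ (2z/n!)(2∫₀^z M)^n`, where `M(x) = m(x) - m(0)`. -/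
theorem stmt_5 (m : StieltjesFunction ℝ)
    (hm_zero : ∀ x < (0 : ℝ), m x = 0)
    (hm_pos : ∀ x > (0 : ℝ), 0 < m x)
    (M : ℝ → ℝ) (hM : ∀ x, M x = m x - m 0)
    (C : ℕ → ℝ → ℝ)
    (hC0 : ∀ z, C 0 z = 2 * z)
    (hCrec : ∀ n z, C (n + 1) z =
      2 * ∫ x in (0 : ℝ)..z, (∫ r in Ioc 0 x, C n r ∂ m.measure)) :
    ∀ n : ℕ, (∀ z, 0 ≤ z → 0 ≤ C n z) ∧ MonotoneOn (C n) (Ici 0) ∧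
      (∀ z, 0 ≤ z →
        C n z ≤ (2 * z / Nat.factorial n) * (2 * ∫ x in (0 : ℝ)..z, M x) ^ n) := by
  have hMfun : M = fun y => m y - m 0 := funext hM
  have hMmono : Monotone M := by
    intro a b hab
    simp only [hMfun]
    exact sub_le_sub_right (m.mono hab) _
  have hMmeas : Measurable M := hMmono.measurable
  have hMint : ∀ a b : ℝ, IntervalIntegrable M volume a b := fun a b =>
    (hMmono.monotoneOn _).intervalIntegrable
  have hMnonneg : ∀ x : ℝ, 0 ≤ x → 0 ≤ M x := by
    intro x hx
    rw [hM]
    exact sub_nonneg.2 (m.mono hx)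
  set A : ℝ → ℝ := fun z => ∫ x in (0 : ℝ)..z, M x with hA
  have hAcont : Continuous A := intervalIntegral.continuous_primitive hMint 0
  have hAmono : ∀ x y : ℝ, 0 ≤ x → x ≤ y → A x ≤ A y := by
    intro x y hx hxy
    have h0 : A y = A x + ∫ t in x..y, M t :=
      (intervalIntegral.integral_add_adjacent_intervals (hMint 0 x) (hMint x y)).symm
    have h1 : 0 ≤ ∫ t in x..y, M t :=
      intervalIntegral.integral_nonneg hxy (fun u hu => hMnonneg u (hx.trans hu.1))
    linarith
  have hAnonneg : ∀ z : ℝ, 0 ≤ z → 0 ≤ A z := by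
    intro z hz
    have : A 0 = 0 := intervalIntegral.integral_same
    have := hAmono 0 z le_rfl hz
    linarith
  have hAderiv : ∀ x : ℝ, HasDerivWithinAt A (M x) (Ioi x) x := by
    intro x
    have hmeas : StronglyMeasurableAtFilter M (nhdsWithin x (Ioi x)) :=
      hMmeas.stronglyMeasurable.stronglyMeasurableAtFilter
    have hcont : ContinuousWithinAt M (Ici x) x := by
      rw [hMfun]
      exact (m.right_continuous x).sub continuousWithinAt_const
    exact (intervalIntegral.integral_hasDerivWithinAt_right (s := Ici x) (t := Ioi x)
      (hMint 0 x) hmeas (hcont.mono Ioi_subset_Ici_self)).mono Ioi_subset_Ici_self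
  intro n
  induction n with
  | zero =>
    refine ⟨fun z hz => by rw [hC0]; linarith, ?_, fun z hz => by rw [hC0]; norm_num⟩
    intro a _ b _ hab
    rw [hC0, hC0]; linarith
  | succ n ih =>
    obtain ⟨h1, h2, h3⟩ := ih
    set μ := m.measure with hμ
    set g : ℝ → ℝ := fun x => ∫ r in Ioc 0 x, C n r ∂μ with hg
    have hμfin : ∀ x : ℝ, μ (Ioc 0 x) ≠ ⊤ := by
      intro x
      rw [hμ, m.measure_Ioc]
      exact ENNReal.ofReal_ne_top
    have hμval : ∀ x : ℝ, 0 ≤ x → (μ (Ioc 0 x)).toReal = M x := by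
      intro x hx
      rw [hμ, m.measure_Ioc, ENNReal.toReal_ofReal (sub_nonneg.2 (m.mono hx)), hM]
    have hCnmax : Monotone (fun r => C n (max r 0)) := by
      intro a b hab
      exact h2 (le_max_right a 0) (le_max_right b 0) (max_le_max hab le_rfl)
    have hCn_int : ∀ x : ℝ, 0 ≤ x → IntegrableOn (C n) (Ioc 0 x) μ := by
      intro x hx
      have hint : IntegrableOn (fun r => C n (max r 0)) (Ioc 0 x) μ := by
        apply Measure.integrableOn_of_bounded (hμfin x)
          hCnmax.measurable.stronglyMeasurable.aestronglyMeasurable (M := C n x)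
        filter_upwards [ae_restrict_mem measurableSet_Ioc] with r hr
        show ‖C n (max r 0)‖ ≤ C n x
        rw [max_eq_left hr.1.le, Real.norm_eq_abs, abs_of_nonneg (h1 r hr.1.le)]
        exact h2 hr.1.le hx hr.2
      apply hint.congr_fun _ measurableSet_Ioc
      intro r hr
      show C n (max r 0) = C n r
      rw [max_eq_left hr.1.le]
    have hg_nonneg : ∀ x : ℝ, 0 ≤ g x := fun x =>
      setIntegral_nonneg measurableSet_Ioc (fun r hr => h1 r hr.1.le)
    have hg_mono : Monotone g := by
      intro x y hxy
      rcases le_or_gt y 0 with hy | hy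
      · have hx : x ≤ 0 := hxy.trans hy
        simp only [hg, Ioc_eq_empty (not_lt.2 hx), Ioc_eq_empty (not_lt.2 hy),
          Measure.restrict_empty, integral_zero_measure, le_refl]
      · rcases le_or_gt x 0 with hx | hx
        · have : g x = 0 := by
            simp only [hg, Ioc_eq_empty (not_lt.2 hx), Measure.restrict_empty,
              integral_zero_measure]
          rw [this]; exact hg_nonneg y
        · exact setIntegral_mono_set (hCn_int y hy.le)
            (ae_restrict_of_forall_mem measurableSet_Ioc (fun r hr => h1 r hr.1.le))
            (HasSubset.Subset.eventuallyLE (Ioc_subset_Ioc_right hxy))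
    have hg_ii : ∀ a b : ℝ, IntervalIntegrable g volume a b := fun a b =>
      (hg_mono.monotoneOn _).intervalIntegrable
    have hnonneg : ∀ z, 0 ≤ z → 0 ≤ C (n + 1) z := by
      intro z hz
      rw [hCrec]
      have : 0 ≤ ∫ x in (0:ℝ)..z, g x :=
        intervalIntegral.integral_nonneg hz (fun u _ => hg_nonneg u)
      linarith
    refine ⟨hnonneg, ?_, ?_⟩
    · intro a ha b hb hab
      rw [hCrec, hCrec]
      have h0 : (∫ x in (0:ℝ)..b, g x) = (∫ x in (0:ℝ)..a, g x) + ∫ x in a..b, g x :=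
        (intervalIntegral.integral_add_adjacent_intervals (hg_ii 0 a) (hg_ii a b)).symm
      have h1' : 0 ≤ ∫ x in a..b, g x :=
        intervalIntegral.integral_nonneg hab (fun u _ => hg_nonneg u)
      linarith
    · intro z hz
      -- pointwise bound on g
      have hgle : ∀ x, 0 ≤ x → g x ≤ 2 * x / Nat.factorial n * (2 * A x) ^ n * M x := by
        intro x hx
        set c : ℝ := 2 * x / Nat.factorial n * (2 * A x) ^ n with hc
        have hc_nonneg : 0 ≤ c := by
          apply mul_nonneg
          · positivity
          · exact pow_nonneg (by linarith [hAnonneg x hx]) n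
        have hstep : g x ≤ ∫ _ in Ioc 0 x, c ∂μ := by
          apply setIntegral_mono_on (hCn_int x hx)
            (integrableOn_const (hμfin x))
            measurableSet_Ioc
          intro r hr
          have hr0 : (0:ℝ) ≤ r := hr.1.le
          have hrx : r ≤ x := hr.2
          refine (h3 r hr0).trans ?_
          rw [hc]
          apply mul_le_mul
          · have hfac : (0:ℝ) < Nat.factorial n := by exact_mod_cast Nat.factorial_pos n
            exact (div_le_div_iff_of_pos_right hfac).2 (by linarith)
          · apply pow_le_pow_left₀ (by linarith [hAnonneg r hr0])
            have := hAmono r x hr0 hrx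
            linarith
          · exact pow_nonneg (by linarith [hAnonneg r hr0]) n
          · positivity
        have hconst : (∫ _ in Ioc 0 x, c ∂μ) = M x * c := by
          rw [setIntegral_const, smul_eq_mul, measureReal_def, hμval x hx]
        rw [hconst] at hstep
        calc g x ≤ M x * c := hstep
          _ = c * M x := mul_comm _ _
      -- integrability of the bounding function
      have hb_ii : IntervalIntegrable (fun x => 2 * z / Nat.factorial n * (2 * A x) ^ n * M x)
          volume 0 z := by
        apply IntervalIntegrable.continuousOn_mul (hMint 0 z)
        exact Continuous.continuousOn
          (continuous_const.mul ((continuous_const.mul hAcont).pow n))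
      -- bound the interval integral
      have hIle : (∫ x in (0:ℝ)..z, g x) ≤
          ∫ x in (0:ℝ)..z, 2 * z / Nat.factorial n * (2 * A x) ^ n * M x := by
        apply intervalIntegral.integral_mono_on hz (hg_ii 0 z) hb_ii
        intro x hx
        refine (hgle x hx.1).trans ?_
        have hMx : 0 ≤ M x := hMnonneg x hx.1
        have hpow : (0:ℝ) ≤ (2 * A x) ^ n := pow_nonneg (by linarith [hAnonneg x hx.1]) n
        have hfac : (0:ℝ) < Nat.factorial n := by exact_mod_cast Nat.factorial_pos n
        have : 2 * x / Nat.factorial n ≤ 2 * z / Nat.factorial n :=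
          (div_le_div_iff_of_pos_right hfac).2 (by linarith [hx.2])
        nlinarith [mul_nonneg hpow hMx]
      -- FTC computation
      have hAnM_ii : IntervalIntegrable (fun x => A x ^ n * M x) volume 0 z := by
        apply IntervalIntegrable.continuousOn_mul (hMint 0 z)
        exact Continuous.continuousOn (hAcont.pow n)
      have hFTC : (∫ x in (0:ℝ)..z, ((n:ℝ) + 1) * A x ^ n * M x) = A z ^ (n + 1) := by
        have hA0 : A 0 = 0 := intervalIntegral.integral_same
        have := intervalIntegral.integral_eq_sub_of_hasDeriv_right_of_le hz
          (f := fun x => A x ^ (n + 1)) (f' := fun x => ((n:ℝ) + 1) * A x ^ n * M x)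
          (Continuous.continuousOn (hAcont.pow (n + 1)))
          (fun x _ => by
            simpa [Pi.pow_def] using (hAderiv x).pow (n + 1))
          (by
            have : (fun x => ((n:ℝ) + 1) * A x ^ n * M x)
                = fun x => ((n:ℝ) + 1) * (A x ^ n * M x) := by funext x; ring
            rw [this]
            exact hAnM_ii.const_mul _)
        rw [this]
        show A z ^ (n + 1) - A 0 ^ (n + 1) = A z ^ (n + 1)
        rw [hA0]
        simp
      have hInt_val : (∫ x in (0:ℝ)..z, A x ^ n * M x) = A z ^ (n + 1) / ((n:ℝ) + 1) := by
        have hne : ((n:ℝ) + 1) ≠ 0 := by positivity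
        have hconst : (∫ x in (0:ℝ)..z, ((n:ℝ) + 1) * (A x ^ n * M x))
            = ((n:ℝ) + 1) * ∫ x in (0:ℝ)..z, A x ^ n * M x :=
          intervalIntegral.integral_const_mul _ _
        have heq : ((n:ℝ) + 1) * (∫ x in (0:ℝ)..z, A x ^ n * M x) = A z ^ (n + 1) := by
          rw [← hconst, ← hFTC]
          congr 1; funext x; ring
        rw [eq_div_iff hne]
        linear_combination heq
      -- put everything together
      have hfinal : (∫ x in (0:ℝ)..z, 2 * z / Nat.factorial n * (2 * A x) ^ n * M x)
          = 2 * z / Nat.factorial n * 2 ^ n * (A z ^ (n + 1) / ((n:ℝ) + 1)) := by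
        rw [← hInt_val, ← intervalIntegral.integral_const_mul]
        congr 1; funext x; rw [mul_pow]; ring
      calc C n.succ z = 2 * ∫ x in (0:ℝ)..z, g x := hCrec n z
        _ ≤ 2 * ∫ x in (0:ℝ)..z, 2 * z / Nat.factorial n * (2 * A x) ^ n * M x := by
            linarith
        _ = 2 * (2 * z / Nat.factorial n * 2 ^ n * (A z ^ (n + 1) / ((n:ℝ) + 1))) := by
            rw [hfinal]
        _ = 2 * z / Nat.factorial (n + 1) * (2 * A z) ^ (n + 1) := by
            rw [Nat.factorial_succ, mul_pow]
            have h1' : ((Nat.factorial n : ℝ)) ≠ 0 := by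
              exact_mod_cast (Nat.factorial_pos n).ne'
            have h2' : ((n:ℝ) + 1) ≠ 0 := by positivity
            push_cast
            field_simp
            ring
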